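/- arXiv:2412.07258 — 5 statements merged into one kernel-verified Lean document; each statement's English description precedes it below -/
import Mathlib

section
/- For g(x) = (e^{β(1-x)}-1)/(e^β-1) with β ≠ 0, the function V(x,y) = u⁻¹(u(x)+u(y)), where u(x) = ∫₀ˣ 1/g(z) dz, equals (1/β)·ln((e^{β(x+1)} + e^{β(y+1)} - e^{β(x+y)} - e^β)/(e^β - 1)) for all x, y ∈ [0,1). -/
open Set Real

theorem stmt_8 (β : ℝ) (hβ : β ≠ 0)
    (g : ℝ → ℝ) (hg : ∀ x, g x = (Real.exp (β * (1 - x)) - 1) / (Real.exp β - 1))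
    (u : ℝ → ℝ) (hu : ∀ x ∈ Ico (0:ℝ) 1, u x = ∫ z in (0:ℝ)..x, 1 / g z)
    (V : ℝ → ℝ → ℝ)
    (hV : ∀ x ∈ Ico (0:ℝ) 1, ∀ y ∈ Ico (0:ℝ) 1,
      V x y ∈ Ico (0:ℝ) 1 ∧ u (V x y) = u x + u y) :
    ∀ x ∈ Ico (0:ℝ) 1, ∀ y ∈ Ico (0:ℝ) 1,
      V x y = (1 / β) * Real.log
        ((Real.exp (β * (x + 1)) + Real.exp (β * (y + 1))
          - Real.exp (β * (x + y)) - Real.exp β) / (Real.exp β - 1)) := by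
  have hexp_ne : ∀ s : ℝ, s ≠ 0 → Real.exp s ≠ 1 := by
    intro s hs h
    exact hs ((Real.exp_eq_one_iff s).mp h)
  have hE1 : Real.exp β - 1 ≠ 0 := sub_ne_zero.mpr (hexp_ne β hβ)
  have hd0 : (1:ℝ) - Real.exp (-β) ≠ 0 := by
    intro h
    exact hexp_ne (-β) (neg_ne_zero.mpr hβ) (by linarith)
  have hc : (1 - Real.exp β) / β ≠ 0 := by
    apply div_ne_zero _ hβ
    intro h
    exact hexp_ne β hβ (by linarith)
  -- sign lemma: for t < 1, (1 - exp (β*(t-1)))/(1 - exp (-β)) > 0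
  have hbpos : ∀ t : ℝ, t < 1 → 0 < (1 - Real.exp (β*(t-1))) / (1 - Real.exp (-β)) := by
    intro t ht
    rcases lt_or_gt_of_ne hβ with hneg | hpos
    · have h1 : 1 < Real.exp (β*(t-1)) := by
        rw [Real.one_lt_exp_iff]
        exact mul_pos_of_neg_of_neg hneg (by linarith)
      have h2 : 1 < Real.exp (-β) := by
        rw [Real.one_lt_exp_iff]; linarith
      exact div_pos_of_neg_of_neg (by linarith) (by linarith)
    · have h1 : Real.exp (β*(t-1)) < 1 := by
        rw [Real.exp_lt_one_iff]
        exact mul_neg_of_pos_of_neg hpos (by linarith)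
      have h2 : Real.exp (-β) < 1 := by
        rw [Real.exp_lt_one_iff]; linarith
      exact div_pos (by linarith) (by linarith)
  have hane : ∀ t : ℝ, t < 1 → (1:ℝ) - Real.exp (β*(t-1)) ≠ 0 := by
    intro t ht h
    exact hexp_ne (β*(t-1)) (mul_ne_zero hβ (by linarith)) (by linarith)
  -- explicit formula for u on [0,1)
  have key : ∀ t ∈ Ico (0:ℝ) 1, u t =
      ((1 - Real.exp β)/β) * Real.log ((1 - Real.exp (β*(t-1))) / (1 - Real.exp (-β))) := by
    intro t ht
    obtain ⟨ht0, ht1⟩ := ht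
    have hIcc : Set.uIcc (0:ℝ) t = Set.Icc 0 t := Set.uIcc_of_le ht0
    have hderiv : ∀ z ∈ Set.uIcc (0:ℝ) t,
        HasDerivAt (fun z => ((1 - Real.exp β)/β) * Real.log (1 - Real.exp (β*(z-1))))
          (1 / g z) z := by
      intro z hz
      rw [hIcc] at hz
      have hz1 : z < 1 := lt_of_le_of_lt hz.2 ht1
      have haz : (1:ℝ) - Real.exp (β*(z-1)) ≠ 0 := hane z hz1
      have h1 : HasDerivAt (fun z : ℝ => β*(z-1)) β z := by
        simpa using ((hasDerivAt_id z).sub_const 1).const_mul β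
      have h2 : HasDerivAt (fun z : ℝ => 1 - Real.exp (β*(z-1)))
          (-(Real.exp (β*(z-1)) * β)) z := by
        simpa using (h1.exp).const_sub 1
      have h3 := (Real.hasDerivAt_log haz).comp z h2
      have h4 := h3.const_mul ((1 - Real.exp β)/β)
      refine h4.congr_deriv (Eq.symm ?_)
      rw [hg]
      rw [show β*(1-z) = -(β*(z-1)) by ring, Real.exp_neg]
      have hA0 : Real.exp (β*(z-1)) ≠ 0 := Real.exp_ne_zero _
      field_simp
      ring
    have hint : IntervalIntegrable (fun z => 1 / g z) MeasureTheory.volume 0 t := by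
      apply ContinuousOn.intervalIntegrable
      rw [hIcc]
      simp only [hg, one_div_div]
      apply ContinuousOn.div continuousOn_const
      · fun_prop
      · intro z hz
        have hz1 : z < 1 := lt_of_le_of_lt hz.2 ht1
        intro h
        exact hexp_ne (β*(1-z)) (mul_ne_zero hβ (by linarith)) (by linarith)
    rw [hu t ⟨ht0, ht1⟩, intervalIntegral.integral_eq_sub_of_hasDerivAt hderiv hint]
    rw [Real.log_div (hane t ht1) hd0]
    rw [show β * ((0:ℝ)-1) = -β by ring]
    ring
  -- main argument
  intro x hx y hy
  obtain ⟨hVmem, hVu⟩ := hV x hx y hy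
  have hux := key x hx
  have huy := key y hy
  have huv := key _ hVmem
  set v := V x y with hv
  set bx := (1 - Real.exp (β*(x-1))) / (1 - Real.exp (-β)) with hbx
  set by' := (1 - Real.exp (β*(y-1))) / (1 - Real.exp (-β)) with hby
  set bv := (1 - Real.exp (β*(v-1))) / (1 - Real.exp (-β)) with hbv
  have hbxp : 0 < bx := hbpos x hx.2
  have hbyp : 0 < by' := hbpos y hy.2
  have hbvp : 0 < bv := hbpos v hVmem.2
  have hlogeq : Real.log bv = Real.log (bx * by') := by
    rw [hux, huy, huv] at hVu
    rw [Real.log_mul (ne_of_gt hbxp) (ne_of_gt hbyp)]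
    have := mul_left_cancel₀ hc (by linarith [hVu] :
      ((1 - Real.exp β)/β) * Real.log bv = ((1 - Real.exp β)/β) * (Real.log bx + Real.log by'))
    exact this
  have hbeq : bv = bx * by' :=
    Real.log_injOn_pos (Set.mem_Ioi.mpr hbvp) (Set.mem_Ioi.mpr (mul_pos hbxp hbyp)) hlogeq
  -- translate to exponentials
  have hEx : Real.exp (β*(x-1)) = Real.exp (β*x) / Real.exp β := by
    rw [show β*(x-1) = β*x - β by ring, Real.exp_sub]
  have hEy : Real.exp (β*(y-1)) = Real.exp (β*y) / Real.exp β := by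
    rw [show β*(y-1) = β*y - β by ring, Real.exp_sub]
  have hEv : Real.exp (β*(v-1)) = Real.exp (β*v) / Real.exp β := by
    rw [show β*(v-1) = β*v - β by ring, Real.exp_sub]
  have hEn : Real.exp (-β) = 1 / Real.exp β := by
    rw [Real.exp_neg]; exact (inv_eq_one_div _)
  have hE0 : Real.exp β ≠ 0 := Real.exp_ne_zero β
  have hexpv : Real.exp (β*v) =
      (Real.exp (β * (x + 1)) + Real.exp (β * (y + 1))
          - Real.exp (β * (x + y)) - Real.exp β) / (Real.exp β - 1) := by
    have h1 : Real.exp (β * (x + 1)) = Real.exp (β*x) * Real.exp β := by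
      rw [show β*(x+1) = β*x + β by ring, Real.exp_add]
    have h2 : Real.exp (β * (y + 1)) = Real.exp (β*y) * Real.exp β := by
      rw [show β*(y+1) = β*y + β by ring, Real.exp_add]
    have h3 : Real.exp (β * (x + y)) = Real.exp (β*x) * Real.exp (β*y) := by
      rw [show β*(x+y) = β*x + β*y by ring, Real.exp_add]
    rw [h1, h2, h3]
    rw [hbv, hbx, hby, hEx, hEy, hEv, hEn] at hbeq
    have hd0' : (1:ℝ) - 1 / Real.exp β ≠ 0 := by rwa [hEn] at hd0
    field_simp at hbeq
    have hcancel : (rexp β - rexp (β*v)) * (rexp β - 1)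
        = (rexp β - rexp (β*x)) * (rexp β - rexp (β*y)) := by
      apply mul_right_cancel₀ hE1
      linear_combination (rexp β - 1) * hbeq
    rw [eq_div_iff hE1]
    linear_combination -hcancel
  rw [← hexpv, Real.log_exp]
  field_simp
end

section
/- Let g be strictly decreasing, C¹ on [0,1] with g(0)=1, g(1)=0, and V defined by V(x,y) = u⁻¹(u(x)+u(y)). For any ε ∈ (0,1), all x ∈ [0, 1-ε] and all y ∈ [0,1), the absolute value of the x-derivative of g(V(x,y))/g(x) is at most 2·‖g'‖_∞ / (g(1-ε))², where ‖g'‖_∞ = max_{0≤z≤1} |g'(z)|. -/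
open Set

theorem stmt_12 (g : ℝ → ℝ)
    (hanti : StrictAntiOn g (Icc 0 1)) (hC1 : ContDiffOn ℝ 1 g (Icc 0 1))
    (hg0 : g 0 = 1) (hg1 : g 1 = 0)
    (u : ℝ → ℝ) (hu : ∀ x ∈ Ico (0:ℝ) 1, u x = ∫ z in (0:ℝ)..x, 1 / g z)
    (V : ℝ → ℝ → ℝ)
    (hV : ∀ x ∈ Ico (0:ℝ) 1, ∀ y ∈ Ico (0:ℝ) 1,
      V x y ∈ Ico (0:ℝ) 1 ∧ u (V x y) = u x + u y)
    (M : ℝ) (hM : IsGreatest ((fun z => |deriv g z|) '' Icc (0:ℝ) 1) M)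
    (ε : ℝ) (hε : ε ∈ Ioo (0:ℝ) 1) :
    ∀ x ∈ Icc (0:ℝ) (1 - ε), ∀ y ∈ Ico (0:ℝ) 1,
      |derivWithin (fun x' => g (V x' y) / g x') (Ico (0:ℝ) 1) x|
        ≤ 2 * M / (g (1 - ε)) ^ 2 := by
  intro x hx y hy
  have hε0 := hε.1
  have hε1 := hε.2
  have hxI : x ∈ Ico (0:ℝ) 1 := ⟨hx.1, lt_of_le_of_lt hx.2 (by linarith)⟩
  have hMnn : 0 ≤ M := by
    obtain ⟨z, hz, hzM⟩ := hM.1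
    rw [← hzM]; exact abs_nonneg _
  have hRHS : 0 ≤ 2 * M / (g (1 - ε)) ^ 2 :=
    div_nonneg (by linarith) (sq_nonneg _)
  have hgc : ContinuousOn g (Icc 0 1) := hC1.continuousOn
  have h0 : (0:ℝ) ∈ Ico (0:ℝ) 1 := ⟨le_refl 0, one_pos⟩
  have hgpos : ∀ z ∈ Ico (0:ℝ) 1, 0 < g z := by
    intro z hz
    have := hanti (Ico_subset_Icc_self hz) (right_mem_Icc.mpr zero_le_one) hz.2
    rwa [hg1] at this
  -- continuity and integrability of 1/g on Ico 0 1
  have hinv_cont : ContinuousOn (fun z => 1 / g z) (Ico (0:ℝ) 1) :=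
    continuousOn_const.div (hgc.mono Ico_subset_Icc_self) fun z hz => (hgpos z hz).ne'
  have hint : ∀ a ∈ Ico (0:ℝ) 1, ∀ b ∈ Ico (0:ℝ) 1,
      IntervalIntegrable (fun z => 1 / g z) MeasureTheory.volume a b := by
    intro a ha b hb
    exact (hinv_cont.mono (ordConnected_Ico.uIcc_subset ha hb)).intervalIntegrable
  -- derivative of u within Ico 0 1
  have hIco_mem : ∀ z ∈ Ico (0:ℝ) 1, Ico (0:ℝ) 1 ∈ nhdsWithin z (Icc (0:ℝ) 1) := by
    intro z hz
    refine mem_nhdsWithin.mpr ⟨Iio 1, isOpen_Iio, hz.2, ?_⟩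
    rintro w ⟨hw1, hw2⟩
    exact ⟨hw2.1, hw1⟩
  have hu' : ∀ z ∈ Ico (0:ℝ) 1, HasDerivWithinAt u (1 / g z) (Ico (0:ℝ) 1) z := by
    intro z hz
    haveI : Fact (z ∈ Icc (0:ℝ) 1) := ⟨Ico_subset_Icc_self hz⟩
    have hU : HasDerivWithinAt (fun t => ∫ w in (0:ℝ)..t, 1 / g w) (1 / g z)
        (Icc (0:ℝ) 1) z := by
      refine intervalIntegral.integral_hasDerivWithinAt_right (hint 0 h0 z hz) ?_ ?_
      · exact ⟨Ico (0:ℝ) 1, hIco_mem z hz,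
          hinv_cont.aestronglyMeasurable measurableSet_Ico⟩
      · exact (hinv_cont z hz).mono_of_mem_nhdsWithin (hIco_mem z hz)
    exact ((hU.mono Ico_subset_Icc_self).congr (fun t ht => hu t ht) (hu z hz))
  have hucont : ContinuousOn u (Ico (0:ℝ) 1) :=
    fun z hz => (hu' z hz).continuousWithinAt
  -- strict monotonicity of u
  have hu0 : u 0 = 0 := by rw [hu 0 h0, intervalIntegral.integral_same]
  have husm : StrictMonoOn u (Ico (0:ℝ) 1) := by
    intro a ha b hb hab
    have h1 : u a + ∫ z in a..b, 1 / g z = u b := by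
      rw [hu a ha, hu b hb]
      exact intervalIntegral.integral_add_adjacent_intervals (hint 0 h0 a ha) (hint a ha b hb)
    have h2 : 0 < ∫ z in a..b, 1 / g z := by
      refine intervalIntegral.intervalIntegral_pos_of_pos_on (hint a ha b hb) ?_ hab
      intro t ht
      exact div_pos one_pos (hgpos t ⟨le_trans ha.1 ht.1.le, lt_trans ht.2 hb.2⟩)
    linarith
  rcases eq_or_lt_of_le hy.1 with hy0 | hy0
  · -- case y = 0 : V x' y = x' and the function is constant 1
    have hVid : ∀ x' ∈ Ico (0:ℝ) 1, V x' y = x' := by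
      intro x' hx'
      obtain ⟨hm, he⟩ := hV x' hx' y hy
      refine husm.injOn hm hx' ?_
      rw [he, ← hy0, hu0, add_zero]
    have hEq : EqOn (fun x' => g (V x' y) / g x') (fun _ => (1:ℝ)) (Ico (0:ℝ) 1) := by
      intro x' hx'
      simp only [hVid x' hx']
      exact div_self (hgpos x' hx').ne'
    have hz : derivWithin (fun x' => g (V x' y) / g x') (Ico (0:ℝ) 1) x = 0 := by
      rw [derivWithin_congr hEq (hEq hxI)]
      exact (hasDerivWithinAt_const x _ (1:ℝ)).derivWithin ((uniqueDiffOn_Ico 0 1) x hxI)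
    rw [hz]
    simpa using hRHS
  · -- case 0 < y
    obtain ⟨hpmem, hpval⟩ := hV x hxI y hy
    set p := V x y with hpdef
    have huy : 0 < u y := by rw [← hu0]; exact husm h0 hy hy0
    have hux : 0 ≤ u x := by
      rw [← hu0]
      rcases eq_or_lt_of_le hxI.1 with h | h
      · rw [h]
      · exact (husm h0 hxI h).le
    have hppos : 0 < p := by
      rcases eq_or_lt_of_le hpmem.1 with h | h
      · exfalso
        have : u p = 0 := by rw [← h, hu0]
        linarith [hpval ▸ this]
      · exact h
    have hp1 : p < 1 := hpmem.2
    set w := Function.invFunOn u (Ico (0:ℝ) 1) with hwdef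
    -- key property of the local inverse
    have key : ∀ a b : ℝ, 0 ≤ a → a < b → b < 1 →
        ∀ t ∈ Ioo (u a) (u b), u (w t) = t ∧ w t ∈ Ioo a b := by
      intro a b ha hab hb1 t ht
      have hsub : Icc a b ⊆ Ico (0:ℝ) 1 :=
        fun z hz => ⟨le_trans ha hz.1, lt_of_le_of_lt hz.2 hb1⟩
      obtain ⟨c, hc, hct⟩ := intermediate_value_Ioo hab.le (hucont.mono hsub) ht
      have hcs : c ∈ Ico (0:ℝ) 1 := hsub (Ioo_subset_Icc_self hc)
      have h1 : u (w t) = t := Function.invFunOn_eq ⟨c, hcs, hct⟩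
      have h2 : w t ∈ Ico (0:ℝ) 1 := Function.invFunOn_mem ⟨c, hcs, hct⟩
      have hwc : w t = c := husm.injOn h2 hcs (by rw [h1, hct])
      exact ⟨h1, hwc ▸ hc⟩
    have hmem_nhds : ∀ a b : ℝ, 0 ≤ a → a < p → p < b → b < 1 →
        Ioo (u a) (u b) ∈ nhds (u p) := by
      intro a b ha hap hpb hb1
      refine Ioo_mem_nhds ?_ ?_
      · exact husm ⟨ha, lt_trans hap hp1⟩ hpmem hap
      · exact husm hpmem ⟨le_trans (le_trans ha hap.le) hpb.le, hb1⟩ hpb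
    have habP : (0:ℝ) ≤ p/2 ∧ p/2 < p ∧ p < (p+1)/2 ∧ (p+1)/2 < 1 := by
      constructor; · linarith
      constructor; · linarith
      constructor <;> linarith
    have hup_mem : u p ∈ Ioo (u (p/2)) (u ((p+1)/2)) := by
      constructor
      · exact husm ⟨habP.1, by linarith⟩ hpmem habP.2.1
      · exact husm hpmem ⟨by linarith, habP.2.2.2⟩ habP.2.2.1
    have hwp : w (u p) = p := by
      have hk := key (p/2) ((p+1)/2) habP.1 (by linarith) habP.2.2.2 (u p) hup_mem
      exact husm.injOn (Function.invFunOn_mem ⟨p, hpmem, rfl⟩) hpmem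
        (Function.invFunOn_eq ⟨p, hpmem, rfl⟩)
    have heq : ∀ᶠ t in nhds (u p), u (w t) = t := by
      filter_upwards [hmem_nhds (p/2) ((p+1)/2) habP.1 habP.2.1 habP.2.2.1 habP.2.2.2] with t ht
      exact (key (p/2) ((p+1)/2) habP.1 (by linarith) habP.2.2.2 t ht).1
    have hw_cont : ContinuousAt w (u p) := by
      rw [ContinuousAt, hwp]
      rw [(nhds_basis_Ioo p).tendsto_right_iff]
      rintro ⟨l, r⟩ ⟨hl, hr⟩
      set a := max l (p/2) with hadef
      set b := min r ((p+1)/2) with hbdef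
      have ha0 : 0 ≤ a := le_trans habP.1 (le_max_right _ _)
      have hap : a < p := max_lt hl habP.2.1
      have hpb : p < b := lt_min hr habP.2.2.1
      have hb1 : b < 1 := lt_of_le_of_lt (min_le_right _ _) habP.2.2.2
      filter_upwards [hmem_nhds a b ha0 hap hpb hb1] with t ht
      have hk := (key a b ha0 (lt_trans hap hpb) hb1 t ht).2
      exact ⟨lt_of_le_of_lt (le_max_left _ _) hk.1, lt_of_lt_of_le hk.2 (min_le_left _ _)⟩
    have hu_deriv_p : HasDerivAt u (1 / g p) p :=
      (hu' p hpmem).hasDerivAt (Ico_mem_nhds hppos hp1)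
    have hw_deriv : HasDerivAt w (g p) (u p) := by
      have hup : HasDerivAt u (1 / g p) (w (u p)) := by rw [hwp]; exact hu_deriv_p
      have := HasDerivAt.of_local_left_inverse hw_cont hup
        (one_div_ne_zero (hgpos p hpmem).ne') heq
      rwa [one_div, inv_inv] at this
    -- derivative of x ↦ V x y
    have hF : HasDerivWithinAt (fun x' => u x' + u y) (1 / g x) (Ico (0:ℝ) 1) x :=
      (hu' x hxI).add_const _
    have hVW : ∀ x' ∈ Ico (0:ℝ) 1, V x' y = w (u x' + u y) := by
      intro x' hx'
      obtain ⟨hm, he⟩ := hV x' hx' y hy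
      have hex : ∃ c ∈ Ico (0:ℝ) 1, u c = u x' + u y := ⟨V x' y, hm, he⟩
      refine husm.injOn hm (Function.invFunOn_mem hex) ?_
      rw [he, Function.invFunOn_eq hex]
    have hV_deriv : HasDerivWithinAt (fun x' => V x' y) (g p * (1 / g x)) (Ico (0:ℝ) 1) x := by
      have hcomp : HasDerivWithinAt (w ∘ fun x' => u x' + u y) (g p * (1 / g x))
          (Ico (0:ℝ) 1) x :=
        HasDerivAt.comp_hasDerivWithinAt_of_eq x hw_deriv hF hpval
      exact hcomp.congr hVW (hVW x hxI)
    -- derivatives of g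
    set D := fun z => derivWithin g (Icc (0:ℝ) 1) z with hDdef
    have hgD : ∀ z ∈ Icc (0:ℝ) 1, HasDerivWithinAt g (D z) (Icc (0:ℝ) 1) z :=
      fun z hz => ((hC1.differentiableOn one_ne_zero) z hz).hasDerivWithinAt
    have hgp : HasDerivAt g (D p) p :=
      (hgD p (Ico_subset_Icc_self hpmem)).hasDerivAt (Icc_mem_nhds hppos hp1)
    have hgx : HasDerivWithinAt g (D x) (Ico (0:ℝ) 1) x :=
      (hgD x (Ico_subset_Icc_self hxI)).mono Ico_subset_Icc_self
    have h1 : HasDerivWithinAt (fun x' => g (V x' y)) (D p * (g p * (1 / g x)))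
        (Ico (0:ℝ) 1) x := by
      have := HasDerivAt.comp_hasDerivWithinAt x hgp hV_deriv
      exact this
    have hgxne : g x ≠ 0 := (hgpos x hxI).ne'
    have hdiv : HasDerivWithinAt (fun x' => g (V x' y) / g x')
        ((D p * (g p * (1 / g x)) * g x - g (V x y) * D x) / g x ^ 2) (Ico (0:ℝ) 1) x :=
      h1.div hgx hgxne
    have hder : derivWithin (fun x' => g (V x' y) / g x') (Ico (0:ℝ) 1) x
        = (D p * (g p * (1 / g x)) * g x - g (V x y) * D x) / g x ^ 2 :=
      hdiv.derivWithin ((uniqueDiffOn_Ico 0 1) x hxI)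
    have hsimp : (D p * (g p * (1 / g x)) * g x - g (V x y) * D x) / g x ^ 2
        = g p * (D p - D x) / g x ^ 2 := by
      rw [← hpdef]
      field_simp
    -- bound on D
    have hDc : ContinuousOn D (Icc (0:ℝ) 1) :=
      hC1.continuousOn_derivWithin uniqueDiffOn_Icc_zero_one le_rfl
    have hDint : ∀ z ∈ Ioo (0:ℝ) 1, |D z| ≤ M := by
      intro z hz
      have : D z = deriv g z := derivWithin_of_mem_nhds (Icc_mem_nhds hz.1 hz.2)
      rw [this]
      exact hM.2 ⟨z, Ioo_subset_Icc_self hz, rfl⟩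
    have hDle : ∀ z ∈ Ico (0:ℝ) 1, |D z| ≤ M := by
      intro z hz
      rcases eq_or_lt_of_le hz.1 with h | h
      · subst h
        haveI : (nhdsWithin (0:ℝ) (Ioo (0:ℝ) 1)).NeBot := left_nhdsWithin_Ioo_neBot one_pos
        have htend : Filter.Tendsto (fun z => |D z|) (nhdsWithin 0 (Ioo (0:ℝ) 1))
            (nhds (|D 0|)) := by
          have hc : ContinuousWithinAt D (Icc (0:ℝ) 1) 0 :=
            hDc 0 (left_mem_Icc.mpr zero_le_one)
          exact ((hc.mono Ioo_subset_Icc_self).abs)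
        refine le_of_tendsto htend ?_
        filter_upwards [self_mem_nhdsWithin] with t ht using hDint t ht
      · exact hDint z ⟨h, hz.2⟩
    -- final bound
    rw [hder, hsimp]
    have hgp1 : g p ≤ 1 := by
      rw [← hg0]
      exact hanti.antitoneOn (left_mem_Icc.mpr zero_le_one) (Ico_subset_Icc_self hpmem) hpmem.1
    have hgpnn : 0 ≤ g p := (hgpos p hpmem).le
    have h1e : (1:ℝ) - ε ∈ Ico (0:ℝ) 1 := ⟨by linarith, by linarith⟩
    have hge : g (1 - ε) ≤ g x :=
      hanti.antitoneOn (Ico_subset_Icc_self hxI) (Ico_subset_Icc_self h1e) hx.2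
    have hgEps : 0 < g (1 - ε) := hgpos _ h1e
    have hnum : |g p * (D p - D x)| ≤ 2 * M := by
      rw [abs_mul]
      calc |g p| * |D p - D x| ≤ 1 * (|D p| + |D x|) := by
            refine mul_le_mul ?_ (abs_sub _ _) (abs_nonneg _) zero_le_one
            rwa [abs_of_nonneg hgpnn]
        _ ≤ 1 * (M + M) := by
            have := hDle p hpmem
            have := hDle x hxI
            nlinarith
        _ = 2 * M := by ring
    rw [abs_div, abs_of_nonneg (sq_nonneg (g x))]
    refine div_le_div₀ (by linarith) hnum (by positivity) ?_
    exact pow_le_pow_left₀ hgEps.le hge 2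
end

section
/- Let ψ_α, ψ : [0,1) → ℝ with ψ(s) > 0 for all s, and suppose γ(α) → ∞, the ψ_α are uniformly equicontinuous on compact subintervals of [0,1), and ψ_α → ψ uniformly on compact subintervals of [0,1). Define g_α(s) = exp(−γ(α)·∫₀ˢ ψ_α(u) du). Then for every ε ∈ (0,1) and T > 0, sup over x ∈ [ε, 1−ε] and y ∈ [−T, T] of |g_α(x)·e^{−ψ(x)·y} / g_α(x + y/γ(α)) − 1| tends to 0 as α → ∞. -/
open Set Filter

theorem stmt_17
    (γ : ℝ → ℝ) (hγpos : ∀ α ≥ (1:ℝ), 0 < γ α) (hγ : Tendsto γ atTop atTop)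
    (ψα : ℝ → ℝ → ℝ) (ψ : ℝ → ℝ)
    (hcont : ∀ α, ContinuousOn (ψα α) (Ico (0:ℝ) 1))
    (hψcont : ContinuousOn ψ (Ico (0:ℝ) 1))
    (hequi : ∀ b ∈ Ico (0:ℝ) 1, ∀ ε > (0:ℝ), ∃ δ > (0:ℝ), ∀ α ≥ (1:ℝ),
      ∀ x ∈ Icc (0:ℝ) b, ∀ y ∈ Icc (0:ℝ) b, |x - y| < δ → |ψα α x - ψα α y| < ε)
    (hconv : ∀ b ∈ Ico (0:ℝ) 1,
      TendstoUniformlyOn ψα ψ atTop (Icc (0:ℝ) b))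
    (hψpos : ∀ s ∈ Ico (0:ℝ) 1, 0 < ψ s)
    (gα : ℝ → ℝ → ℝ)
    (hgα : ∀ α s, gα α s = Real.exp (-(γ α) * ∫ t in (0:ℝ)..s, ψα α t)) :
    ∀ ε ∈ Ioo (0:ℝ) 1, ∀ T > (0:ℝ), ∀ δ > (0:ℝ), ∃ A : ℝ, ∀ α ≥ A,
      ∀ x ∈ Icc ε (1 - ε), ∀ y ∈ Icc (-T) T,
        |gα α x * Real.exp (-(ψ x) * y) / gα α (x + y / γ α) - 1| < δ := by
  intro ε hε T hT δ hδ
  obtain ⟨hε0, hε1⟩ := hε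
  -- the compact parameter
  set b : ℝ := 1 - ε / 2 with hb
  have hbmem : b ∈ Ico (0:ℝ) 1 := by
    constructor
    · rw [hb]; linarith
    · rw [hb]; linarith
  -- target smallness for the exponent
  set η : ℝ := min 1 (δ / 3) / T with hη
  have hη0 : 0 < η := by
    apply div_pos _ hT
    exact lt_min one_pos (by linarith)
  have hTη : T * η = min 1 (δ / 3) := by
    rw [hη]; field_simp [hT.ne']
  -- equicontinuity
  obtain ⟨δ₁, hδ₁0, hδ₁⟩ := hequi b hbmem (η / 2) (by linarith)
  -- uniform convergence
  have hconv' := (Metric.tendstoUniformlyOn_iff.mp (hconv b hbmem)) (η / 2) (by linarith)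
  obtain ⟨A₁, hA₁⟩ := eventually_atTop.mp hconv'
  -- γ large
  have hγ' : ∀ᶠ α in atTop, γ α > max (2 * T / ε) (T / δ₁) :=
    hγ.eventually_gt_atTop _
  obtain ⟨A₂, hA₂⟩ := eventually_atTop.mp hγ'
  refine ⟨max 1 (max A₁ A₂), fun α hα x hx y hy => ?_⟩
  have hα1 : (1:ℝ) ≤ α := le_trans (le_max_left _ _) hα
  have hαA₁ : A₁ ≤ α := le_trans (le_trans (le_max_left _ _) (le_max_right _ _)) hα
  have hαA₂ : A₂ ≤ α := le_trans (le_trans (le_max_right _ _) (le_max_right _ _)) hα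
  have hγα : γ α > max (2 * T / ε) (T / δ₁) := hA₂ α hαA₂
  have hγα0 : 0 < γ α := hγpos α hα1
  have hγ1 : 2 * T / ε < γ α := lt_of_le_of_lt (le_max_left _ _) hγα
  have hγ2 : T / δ₁ < γ α := lt_of_le_of_lt (le_max_right _ _) hγα
  -- T / γ α bounds
  have hTγ1 : T / γ α < ε / 2 := by
    rw [div_lt_iff₀ hγα0]
    rw [div_lt_iff₀ hε0] at hγ1
    nlinarith
  have hTγ2 : T / γ α < δ₁ := by
    rw [div_lt_iff₀ hγα0]
    rw [div_lt_iff₀ hδ₁0] at hγ2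
    nlinarith
  have hyabs : |y| ≤ T := abs_le.mpr ⟨hy.1, hy.2⟩
  have hyγ : |y / γ α| ≤ T / γ α := by
    rw [abs_div, abs_of_pos hγα0]
    gcongr
  set x' : ℝ := x + y / γ α with hx'
  have hxmem : x ∈ Icc (0:ℝ) b := ⟨by linarith [hx.1], by simp only [hb]; linarith [hx.2]⟩
  have hx'mem : x' ∈ Icc (0:ℝ) b := by
    have h1 : -(ε/2) < y / γ α := by
      have := (abs_le.mp hyγ).1; linarith
    have h2 : y / γ α < ε/2 := by
      have := (abs_le.mp hyγ).2; linarith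
    constructor
    · simp only [hx']; linarith [hx.1]
    · simp only [hx', hb]; linarith [hx.2]
  -- integrability
  have hIccb : Icc (0:ℝ) b ⊆ Ico (0:ℝ) 1 := Icc_subset_Ico_iff (hbmem.1) |>.mpr ⟨le_refl _, hbmem.2⟩
  have hint : ∀ c d : ℝ, c ∈ Icc (0:ℝ) b → d ∈ Icc (0:ℝ) b →
      IntervalIntegrable (ψα α) MeasureTheory.volume c d := by
    intro c d hc hd
    apply ContinuousOn.intervalIntegrable
    apply (hcont α).mono
    exact le_trans (uIcc_subset_Icc hc hd) hIccb
  have h0mem : (0:ℝ) ∈ Icc (0:ℝ) b := ⟨le_refl _, hbmem.1⟩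
  have hi1 := hint 0 x h0mem hxmem
  have hi2 := hint 0 x' h0mem hx'mem
  have hi3 := hint x x' hxmem hx'mem
  -- rewrite the ratio as a single exponential
  rw [hgα, hgα, ← Real.exp_add, ← Real.exp_sub]
  have hsub : (∫ t in (0:ℝ)..x', ψα α t) - ∫ t in (0:ℝ)..x, ψα α t
      = ∫ t in x..x', ψα α t := intervalIntegral.integral_interval_sub_left hi2 hi1
  have key : (-γ α * ∫ t in (0:ℝ)..x, ψα α t) + -ψ x * y -
      (-γ α * ∫ t in (0:ℝ)..x', ψα α t) = γ α * ∫ u in x..x', (ψα α u - ψ x) := by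
    rw [intervalIntegral.integral_sub hi3 intervalIntegrable_const,
      intervalIntegral.integral_const, ← hsub]
    have hyy : y = γ α * (x' - x) := by
      rw [hx']; field_simp; ring
    rw [hyy, smul_eq_mul]; ring
  rw [key]
  set E : ℝ := γ α * ∫ u in x..x', (ψα α u - ψ x) with hE
  -- bound |E|
  have hbound : ∀ u ∈ Set.uIoc x x', ‖ψα α u - ψ x‖ ≤ η := by
    intro u hu
    have hu' : u ∈ uIcc x x' := uIoc_subset_uIcc hu
    have humem : u ∈ Icc (0:ℝ) b := uIcc_subset_Icc hxmem hx'mem hu'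
    have hux : |u - x| ≤ |x' - x| := abs_sub_left_of_mem_uIcc hu'
    have hxx' : |x' - x| < δ₁ := by
      rw [show x' - x = y / γ α by rw [hx']; ring]
      exact lt_of_le_of_lt hyγ hTγ2
    have h1 : |ψα α x - ψα α u| < η / 2 := by
      apply hδ₁ α hα1 x hxmem u humem
      rw [abs_sub_comm]
      exact lt_of_le_of_lt hux hxx'
    have h2 : |ψα α x - ψ x| < η / 2 := by
      rw [abs_sub_comm, ← Real.dist_eq]
      exact hA₁ α hαA₁ x hxmem
    have h1' : |ψα α u - ψα α x| < η / 2 := by rw [abs_sub_comm]; exact h1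
    rw [Real.norm_eq_abs,
      show ψα α u - ψ x = (ψα α u - ψα α x) + (ψα α x - ψ x) by ring]
    calc |(ψα α u - ψα α x) + (ψα α x - ψ x)|
        ≤ |ψα α u - ψα α x| + |ψα α x - ψ x| := abs_add_le _ _
      _ ≤ η := by linarith
  have hintabs : |∫ u in x..x', (ψα α u - ψ x)| ≤ η * |x' - x| :=
    intervalIntegral.norm_integral_le_of_norm_le_const hbound
  have hEabs : |E| ≤ T * η := by
    rw [hE, abs_mul, abs_of_pos hγα0]
    have hx'x : |x' - x| = |y| / γ α := by
      rw [show x' - x = y / γ α by rw [hx']; ring, abs_div, abs_of_pos hγα0]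
    calc γ α * |∫ u in x..x', (ψα α u - ψ x)| ≤ γ α * (η * |x' - x|) := by
          apply mul_le_mul_of_nonneg_left hintabs hγα0.le
      _ = η * |y| := by rw [hx'x]; field_simp
      _ ≤ η * T := mul_le_mul_of_nonneg_left hyabs hη0.le
      _ = T * η := mul_comm _ _
  rw [hTη] at hEabs
  have hE1 : |E| ≤ 1 := le_trans hEabs (min_le_left _ _)
  have := Real.abs_exp_sub_one_le hE1
  have hEδ : |E| ≤ δ / 3 := le_trans hEabs (min_le_right _ _)
  linarith
end

section
/- Under the same assumptions, with u_α(x) := ∫₀ˣ 1/g_α(z) dz, for every ε ∈ (0,1) the supremum over x ∈ [ε, 1−ε] of |u_α(x)·γ(α)·g_α(x) − 1/ψ(x)| tends to 0 as α → ∞. -/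
open Set Filter

lemma int_exp_aux (a x C : ℝ) (hC : 0 < C) :
    ∫ z in a..x, Real.exp (-(C*(x-z))) = (1 - Real.exp (-(C*(x-a))))/C := by
  have hderiv : ∀ t ∈ uIcc a x, HasDerivAt (fun t => Real.exp (-(C*(x-t)))/C)
      (Real.exp (-(C*(x-t)))) t := by
    intro t _
    have h1 : HasDerivAt (fun t : ℝ => -(C*(x-t))) C t := by
      have h := (((hasDerivAt_id t).const_sub x).const_mul C).neg
      simp only [mul_neg, mul_one, neg_neg] at h
      exact h
    have := (h1.exp).div_const C
    simpa [mul_div_assoc, mul_div_cancel_right₀, hC.ne'] using this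
  have hint : IntervalIntegrable (fun z => Real.exp (-(C*(x-z)))) MeasureTheory.volume a x :=
    (Real.continuous_exp.comp (by fun_prop)).intervalIntegrable a x
  rw [intervalIntegral.integral_eq_sub_of_hasDerivAt hderiv hint]
  field_simp
  simp

set_option maxHeartbeats 1600000 in
theorem stmt_18
    (γ : ℝ → ℝ) (hγpos : ∀ α ≥ (1:ℝ), 0 < γ α) (hγ : Tendsto γ atTop atTop)
    (ψα : ℝ → ℝ → ℝ) (ψ : ℝ → ℝ)
    (hcont : ∀ α, ContinuousOn (ψα α) (Ico (0:ℝ) 1))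
    (hψcont : ContinuousOn ψ (Ico (0:ℝ) 1))
    (hequi : ∀ b ∈ Ico (0:ℝ) 1, ∀ ε > (0:ℝ), ∃ δ > (0:ℝ), ∀ α ≥ (1:ℝ),
      ∀ x ∈ Icc (0:ℝ) b, ∀ y ∈ Icc (0:ℝ) b, |x - y| < δ → |ψα α x - ψα α y| < ε)
    (hconv : ∀ b ∈ Ico (0:ℝ) 1,
      TendstoUniformlyOn ψα ψ atTop (Icc (0:ℝ) b))
    (hψpos : ∀ s ∈ Ico (0:ℝ) 1, 0 < ψ s)
    (gα : ℝ → ℝ → ℝ)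
    (hgα : ∀ α s, gα α s = Real.exp (-(γ α) * ∫ t in (0:ℝ)..s, ψα α t))
    (uα : ℝ → ℝ → ℝ)
    (huα : ∀ α x, uα α x = ∫ z in (0:ℝ)..x, (gα α z)⁻¹) :
    ∀ ε ∈ Ioo (0:ℝ) 1, ∀ δ > (0:ℝ), ∃ A : ℝ, ∀ α ≥ A,
      ∀ x ∈ Icc ε (1 - ε),
        |uα α x * γ α * gα α x - 1 / ψ x| < δ := by
  intro ε hε δ hδ
  obtain ⟨hε0, hε1⟩ := hε
  set b : ℝ := 1 - ε with hbdef
  have hb0 : (0:ℝ) ≤ b := by rw [hbdef]; linarith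
  have hb1 : b < 1 := by rw [hbdef]; linarith
  have hbmem : b ∈ Ico (0:ℝ) 1 := ⟨hb0, hb1⟩
  have hsub : Icc (0:ℝ) b ⊆ Ico (0:ℝ) 1 := fun u hu => ⟨hu.1, lt_of_le_of_lt hu.2 hb1⟩
  -- minimum of ψ on [0,b]
  have hψc : ContinuousOn ψ (Icc 0 b) := hψcont.mono hsub
  obtain ⟨x₀, hx₀, hmin⟩ := isCompact_Icc.exists_isMinOn ⟨0, left_mem_Icc.mpr hb0⟩ hψc
  set m := ψ x₀ with hmdef
  have hm : 0 < m := hψpos x₀ (hsub hx₀)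
  have hmle : ∀ u ∈ Icc (0:ℝ) b, m ≤ ψ u := fun u hu => hmin hu
  -- the small parameter η
  set η : ℝ := min (m/2) (δ*m^2/8) with hηdef
  have hη : 0 < η := lt_min (by linarith) (by positivity)
  have hη1 : η ≤ m/2 := min_le_left _ _
  have hη2 : η ≤ δ*m^2/8 := min_le_right _ _
  -- equicontinuity modulus
  obtain ⟨δ', hδ'pos, hequi'⟩ := hequi b hbmem (η/2) (by linarith)
  set ρ : ℝ := min (δ'/2) ε with hρdef
  have hρ : 0 < ρ := lt_min (by linarith) hε0
  have hρε : ρ ≤ ε := min_le_right _ _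
  have hρδ' : ρ < δ' := lt_of_le_of_lt (min_le_left _ _) (by linarith)
  -- uniform convergence threshold
  have hcv := (Metric.tendstoUniformlyOn_iff.mp (hconv b hbmem)) (η/2) (by linarith)
  obtain ⟨A₁, hA₁⟩ := eventually_atTop.mp hcv
  -- tail estimate for γ
  have htail : Tendsto (fun t : ℝ => (t + 2/m) * Real.exp (-(t * (m/2 * ρ)))) atTop (nhds 0) := by
    have hc : (0:ℝ) < m/2 * ρ := by positivity
    have h1 : Tendsto (fun y : ℝ => y * Real.exp (-y)) atTop (nhds 0) := by
      simpa using Real.tendsto_pow_mul_exp_neg_atTop_nhds_zero 1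
    have h2 : Tendsto (fun t : ℝ => (m/2*ρ) * t) atTop atTop :=
      (tendsto_const_mul_atTop_of_pos hc).mpr tendsto_id
    have h3 : Tendsto (fun t : ℝ => ((m/2*ρ)*t) * Real.exp (-((m/2*ρ)*t))) atTop (nhds 0) :=
      h1.comp h2
    have h4 : Tendsto (fun t : ℝ => (m/2*ρ)⁻¹ * (((m/2*ρ)*t) * Real.exp (-((m/2*ρ)*t))))
        atTop (nhds 0) := by simpa using h3.const_mul (m/2*ρ)⁻¹
    have h5 : Tendsto (fun t : ℝ => t * Real.exp (-(t * (m/2*ρ)))) atTop (nhds 0) := by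
      refine h4.congr (fun t => ?_)
      rw [show -((m/2*ρ)*t) = -(t * (m/2*ρ)) by ring]
      field_simp
    have h6 : Tendsto (fun t : ℝ => (2/m) * Real.exp (-(t * (m/2*ρ)))) atTop (nhds 0) := by
      have hb : Tendsto (fun t : ℝ => -(t * (m/2*ρ))) atTop atBot :=
        tendsto_neg_atBot_iff.mpr (tendsto_id.atTop_mul_const hc)
      have := Real.tendsto_exp_atBot.comp hb
      simpa using this.const_mul (2/m)
    have := h5.add h6
    simpa [add_mul] using this
  have hev : ∀ᶠ α' in atTop, (γ α' + 2/m) * Real.exp (-(γ α' * (m/2 * ρ))) < δ/4 :=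
    (htail.comp hγ).eventually_lt_const (by linarith)
  obtain ⟨A₂, hA₂⟩ := eventually_atTop.mp hev
  refine ⟨max 1 (max A₁ A₂), ?_⟩
  intro α hα x hx
  have hα1 : (1:ℝ) ≤ α := le_trans (le_max_left _ _) hα
  have hαA₁ : A₁ ≤ α := le_trans (le_trans (le_max_left _ _) (le_max_right 1 _)) hα
  have hαA₂ : A₂ ≤ α := le_trans (le_trans (le_max_right _ _) (le_max_right 1 _)) hα
  have hγα : 0 < γ α := hγpos α hα1
  obtain ⟨hxε, hxb⟩ := hx
  have hx0 : (0:ℝ) ≤ x := le_trans hε0.le hxε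
  set c := ψ x with hcdef
  have hxmem : x ∈ Icc (0:ℝ) b := ⟨hx0, hxb⟩
  have hcm : m ≤ c := hmle x hxmem
  have hc0 : 0 < c := lt_of_lt_of_le hm hcm
  -- pointwise bounds on ψα α
  have hψα_lb : ∀ u ∈ Icc (0:ℝ) b, m/2 ≤ ψα α u := by
    intro u hu
    have h1 := hA₁ α hαA₁ u hu
    rw [Real.dist_eq] at h1
    have h2 := abs_lt.mp h1
    have := hmle u hu
    linarith
  have hψα_near : ∀ u ∈ Icc (x-ρ) x, c - η ≤ ψα α u ∧ ψα α u ≤ c + η := by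
    intro u hu
    have humem : u ∈ Icc (0:ℝ) b := ⟨by linarith [hu.1], le_trans hu.2 hxb⟩
    have h1 := hequi' α hα1 u humem x hxmem (by
      rw [abs_sub_lt_iff]; constructor <;> linarith [hu.1, hu.2])
    have h2 := hA₁ α hαA₁ x hxmem
    rw [Real.dist_eq] at h2
    have h1' := abs_lt.mp h1
    have h2' := abs_lt.mp h2
    constructor <;> linarith
  -- integrability of ψα α
  have hψαint : ∀ a₁ ∈ Icc (0:ℝ) b, ∀ a₂ ∈ Icc (0:ℝ) b,
      IntervalIntegrable (ψα α) MeasureTheory.volume a₁ a₂ := by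
    intro a₁ h₁ a₂ h₂
    exact ((hcont α).mono (le_trans (uIcc_subset_Icc h₁ h₂) hsub)).intervalIntegrable
  set Φ : ℝ → ℝ := fun z => ∫ t in (0:ℝ)..z, ψα α t with hΦdef
  have hΦcont : ContinuousOn Φ (Icc 0 b) := by
    have hio : MeasureTheory.IntegrableOn (ψα α) (Icc 0 b) :=
      ((hcont α).mono hsub).integrableOn_Icc
    have := intervalIntegral.continuousOn_primitive_interval
      (μ := MeasureTheory.volume) (a := (0:ℝ)) (b := b) (f := ψα α)
      (by rwa [uIcc_of_le hb0])
    rwa [uIcc_of_le hb0] at this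
  -- the Laplace-type integrand
  set E : ℝ → ℝ := fun z => Real.exp (-(γ α * (Φ x - Φ z))) with hEdef
  have hEcont : ContinuousOn E (Icc 0 b) := by
    apply Real.continuous_exp.comp_continuousOn
    exact (continuousOn_const.mul (continuousOn_const.sub hΦcont)).neg
  have hEnn : ∀ z, 0 ≤ E z := fun z => (Real.exp_pos _).le
  have hEint : ∀ a₁ ∈ Icc (0:ℝ) b, ∀ a₂ ∈ Icc (0:ℝ) b,
      IntervalIntegrable E MeasureTheory.volume a₁ a₂ := by
    intro a₁ h₁ a₂ h₂
    exact (hEcont.mono (uIcc_subset_Icc h₁ h₂)).intervalIntegrable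
  -- key identity
  have key : uα α x * γ α * gα α x = γ α * ∫ z in (0:ℝ)..x, E z := by
    rw [huα, hgα]
    have h1 : (∫ z in (0:ℝ)..x, (gα α z)⁻¹) * Real.exp (-γ α * ∫ t in (0:ℝ)..x, ψα α t)
        = ∫ z in (0:ℝ)..x, E z := by
      rw [← intervalIntegral.integral_mul_const]
      apply intervalIntegral.integral_congr
      intro z _
      simp only [hgα, hEdef, hΦdef]
      rw [← Real.exp_neg, ← Real.exp_add]
      congr 1
      ring
    calc (∫ z in (0:ℝ)..x, (gα α z)⁻¹) * γ α * Real.exp (-γ α * ∫ t in (0:ℝ)..x, ψα α t)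
        = γ α * ((∫ z in (0:ℝ)..x, (gα α z)⁻¹) *
            Real.exp (-γ α * ∫ t in (0:ℝ)..x, ψα α t)) := by ring
      _ = γ α * ∫ z in (0:ℝ)..x, E z := by rw [h1]
  -- relation between Φ differences and integrals over subintervals
  have hΦdiff : ∀ z ∈ Icc (0:ℝ) x, Φ x - Φ z = ∫ t in z..x, ψα α t := by
    intro z hz
    have hzb : z ∈ Icc (0:ℝ) b := ⟨hz.1, le_trans hz.2 hxb⟩
    have h := intervalIntegral.integral_add_adjacent_intervals
      (hψαint 0 (left_mem_Icc.mpr hb0) z hzb) (hψαint z hzb x hxmem)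
    simp only [hΦdef]
    linarith [h]
  -- lower bound (I1)
  have hI1 : ∀ z ∈ Icc (0:ℝ) x, m/2 * (x - z) ≤ Φ x - Φ z := by
    intro z hz
    rw [hΦdiff z hz]
    have hzb : z ∈ Icc (0:ℝ) b := ⟨hz.1, le_trans hz.2 hxb⟩
    have h := intervalIntegral.integral_mono_on (μ := MeasureTheory.volume) hz.2
      intervalIntegrable_const (hψαint z hzb x hxmem)
      (fun u hu => hψα_lb u ⟨le_trans hz.1 hu.1, le_trans hu.2 hxb⟩)
    simp only [intervalIntegral.integral_const, smul_eq_mul] at h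
    linarith [h]
  -- near bounds (I2)
  have hI2l : ∀ z ∈ Icc (x-ρ) x, (c - η) * (x - z) ≤ Φ x - Φ z := by
    intro z hz
    have hz0 : (0:ℝ) ≤ z := by linarith [hz.1]
    rw [hΦdiff z ⟨hz0, hz.2⟩]
    have hzb : z ∈ Icc (0:ℝ) b := ⟨hz0, le_trans hz.2 hxb⟩
    have h := intervalIntegral.integral_mono_on (μ := MeasureTheory.volume) hz.2
      intervalIntegrable_const (hψαint z hzb x hxmem)
      (fun u hu => (hψα_near u ⟨le_trans hz.1 hu.1, hu.2⟩).1)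
    simp only [intervalIntegral.integral_const, smul_eq_mul] at h
    linarith [h]
  have hI2u : ∀ z ∈ Icc (x-ρ) x, Φ x - Φ z ≤ (c + η) * (x - z) := by
    intro z hz
    have hz0 : (0:ℝ) ≤ z := by linarith [hz.1]
    rw [hΦdiff z ⟨hz0, hz.2⟩]
    have hzb : z ∈ Icc (0:ℝ) b := ⟨hz0, le_trans hz.2 hxb⟩
    have h := intervalIntegral.integral_mono_on (μ := MeasureTheory.volume) hz.2
      (hψαint z hzb x hxmem) intervalIntegrable_const
      (fun u hu => (hψα_near u ⟨le_trans hz.1 hu.1, hu.2⟩).2)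
    simp only [intervalIntegral.integral_const, smul_eq_mul] at h
    linarith [h]
  -- endpoints
  have hxρ0 : (0:ℝ) ≤ x - ρ := by linarith
  have hxρmem : x - ρ ∈ Icc (0:ℝ) b := ⟨hxρ0, by linarith [hρ]⟩
  have h0mem : (0:ℝ) ∈ Icc (0:ℝ) b := left_mem_Icc.mpr hb0
  -- split the integral
  have hsplit : ∫ z in (0:ℝ)..x, E z
      = (∫ z in (0:ℝ)..(x-ρ), E z) + ∫ z in (x-ρ)..x, E z :=
    (intervalIntegral.integral_add_adjacent_intervals
      (hEint 0 h0mem (x-ρ) hxρmem) (hEint (x-ρ) hxρmem x hxmem)).symm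
  -- far integral bounds
  set K : ℝ := Real.exp (-(γ α * (m/2 * ρ))) with hKdef
  have hKpos : 0 < K := Real.exp_pos _
  have hfar_ub : ∫ z in (0:ℝ)..(x-ρ), E z ≤ K := by
    have h1 : ∫ z in (0:ℝ)..(x-ρ), E z ≤ ∫ z in (0:ℝ)..(x-ρ), K := by
      apply intervalIntegral.integral_mono_on hxρ0
        (hEint 0 h0mem (x-ρ) hxρmem) intervalIntegrable_const
      intro z hz
      simp only [hEdef, hKdef]
      apply Real.exp_le_exp.mpr
      have h2 := hI1 z ⟨hz.1, by linarith [hz.2]⟩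
      have h3 : m/2 * ρ ≤ m/2 * (x - z) :=
        mul_le_mul_of_nonneg_left (by linarith [hz.2]) (by linarith)
      have h4 := mul_le_mul_of_nonneg_left (h3.trans h2) hγα.le
      linarith
    have h2 : (∫ _ in (0:ℝ)..(x-ρ), (K:ℝ)) = (x - ρ) * K := by
      simp [mul_comm]
    rw [h2] at h1
    have h3 : (x - ρ) * K ≤ 1 * K :=
      mul_le_mul_of_nonneg_right (by linarith [hxρmem.2, hb1]) hKpos.le
    linarith
  have hfar_lb : 0 ≤ ∫ z in (0:ℝ)..(x-ρ), E z :=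
    intervalIntegral.integral_nonneg hxρ0 (fun u _ => hEnn u)
  -- near integral bounds
  have hcη : (0:ℝ) < c - η := by linarith
  have hcη' : (0:ℝ) < c + η := by linarith
  have hnear_ub : ∫ z in (x-ρ)..x, E z
      ≤ (1 - Real.exp (-(γ α * (c-η) * ρ)))/(γ α * (c-η)) := by
    have h1 : ∫ z in (x-ρ)..x, E z
        ≤ ∫ z in (x-ρ)..x, Real.exp (-(γ α * (c-η) * (x - z))) := by
      apply intervalIntegral.integral_mono_on (by linarith)
        (hEint (x-ρ) hxρmem x hxmem)
        ((Real.continuous_exp.comp (by fun_prop)).intervalIntegrable _ _)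
      intro z hz
      show Real.exp (-(γ α * (Φ x - Φ z))) ≤ Real.exp (-(γ α * (c - η) * (x - z)))
      apply Real.exp_le_exp.mpr
      have h2 := hI2l z hz
      have h4 := mul_le_mul_of_nonneg_left h2 hγα.le
      linarith [h4]
    have h5 := int_exp_aux (x-ρ) x (γ α * (c-η)) (by positivity)
    rw [show x - (x - ρ) = ρ by ring] at h5
    rw [h5] at h1
    exact h1
  have hnear_lb : (1 - Real.exp (-(γ α * (c+η) * ρ)))/(γ α * (c+η))
      ≤ ∫ z in (x-ρ)..x, E z := by
    have h1 : ∫ z in (x-ρ)..x, Real.exp (-(γ α * (c+η) * (x - z)))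
        ≤ ∫ z in (x-ρ)..x, E z := by
      apply intervalIntegral.integral_mono_on (by linarith)
        ((Real.continuous_exp.comp (by fun_prop)).intervalIntegrable _ _)
        (hEint (x-ρ) hxρmem x hxmem)
      intro z hz
      show Real.exp (-(γ α * (c + η) * (x - z))) ≤ Real.exp (-(γ α * (Φ x - Φ z)))
      apply Real.exp_le_exp.mpr
      have h2 := hI2u z hz
      have h4 := mul_le_mul_of_nonneg_left h2 hγα.le
      linarith [h4]
    have h5 := int_exp_aux (x-ρ) x (γ α * (c+η)) (by positivity)
    rw [show x - (x - ρ) = ρ by ring] at h5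
    rw [h5] at h1
    exact h1
  -- assemble
  set e₁ : ℝ := Real.exp (-(γ α * (c-η) * ρ)) with he₁def
  set e₂ : ℝ := Real.exp (-(γ α * (c+η) * ρ)) with he₂def
  set T : ℝ := γ α * ∫ z in (0:ℝ)..x, E z with hTdef
  have hTub : T ≤ γ α * K + 1/(c-η) := by
    have hmono : T ≤ γ α * (K + (1 - e₁)/(γ α * (c-η))) := by
      rw [hTdef, hsplit]
      exact mul_le_mul_of_nonneg_left (add_le_add hfar_ub hnear_ub) hγα.le
    have heq : γ α * (K + (1 - e₁)/(γ α * (c-η))) = γ α * K + (1 - e₁)/(c-η) := by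
      field_simp
    rw [heq] at hmono
    have h2 : (1 - e₁)/(c-η) ≤ 1/(c-η) := by
      apply (div_le_div_iff_of_pos_right hcη).mpr
      linarith [Real.exp_pos (-(γ α * (c-η) * ρ))]
    linarith
  have hTlb : (1 - e₂)/(c+η) ≤ T := by
    have hmono : γ α * (0 + (1 - e₂)/(γ α * (c+η))) ≤ T := by
      rw [hTdef, hsplit]
      exact mul_le_mul_of_nonneg_left (add_le_add hfar_lb hnear_lb) hγα.le
    have heq : γ α * (0 + (1 - e₂)/(γ α * (c+η))) = (1 - e₂)/(c+η) := by
      field_simp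
      ring
    rw [heq] at hmono
    exact hmono
  -- numerical estimates
  have hKsmall : (γ α + 2/m) * K < δ/4 := by rw [hKdef]; exact hA₂ α hαA₂
  have hγK : γ α * K < δ/4 := by linarith [hKsmall, mul_pos (div_pos two_pos hm) hKpos]
  have h2mK : (2/m) * K < δ/4 := by linarith [hKsmall, mul_pos hγα hKpos]
  have he₂K : e₂ ≤ K := by
    rw [he₂def, hKdef]
    apply Real.exp_le_exp.mpr
    have h1 : m/2 * ρ ≤ (c+η) * ρ := mul_le_mul_of_nonneg_right (by linarith) hρ.le
    have h2 := mul_le_mul_of_nonneg_left h1 hγα.le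
    linarith [h2]
  have he₂p : 0 < e₂ := Real.exp_pos _
  have hd1 : 1/(c-η) - 1/c ≤ δ/4 := by
    have heq : 1/(c-η) - 1/c = η/((c-η)*c) := by
      field_simp
      ring
    rw [heq]
    have h1 : η/((c-η)*c) ≤ η/((m/2)*m) := by
      apply div_le_div_of_nonneg_left hη.le (by positivity)
      exact mul_le_mul (by linarith) hcm hm.le (by linarith)
    have h2 : η/((m/2)*m) ≤ δ/4 := by
      rw [div_le_iff₀ (by positivity)]
      linarith [hη2]
    linarith
  have hd2 : 1/c - 1/(c+η) ≤ δ/4 := by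
    have heq : 1/c - 1/(c+η) = η/(c*(c+η)) := by
      field_simp
      ring
    rw [heq]
    have h1 : η/(c*(c+η)) ≤ η/(m*m) := by
      apply div_le_div_of_nonneg_left hη.le (by positivity)
      exact mul_le_mul hcm (by linarith) hm.le (by linarith)
    have h2 : η/(m*m) ≤ δ/4 := by
      rw [div_le_iff₀ (by positivity)]
      linarith [hη2, mul_nonneg (mul_nonneg hδ.le hm.le) hm.le]
    linarith
  have hd3 : e₂/(c+η) ≤ (2/m) * K := by
    have h1 : e₂/(c+η) ≤ K/m := div_le_div₀ hKpos.le he₂K hm (by linarith)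
    have h2 : K/m ≤ (2/m) * K := by
      rw [div_eq_mul_inv, div_eq_mul_inv]
      linarith [mul_pos hKpos (inv_pos.mpr hm)]
    linarith
  -- finish
  rw [key]
  rw [abs_sub_lt_iff]
  constructor
  · -- T - 1/c < δ
    have : T - 1/c ≤ γ α * K + (1/(c-η) - 1/c) := by linarith
    linarith
  · -- 1/c - T < δ
    have h1 : 1/c - T ≤ 1/c - (1 - e₂)/(c+η) := by linarith
    have h2 : (1 - e₂)/(c+η) = 1/(c+η) - e₂/(c+η) := by ring
    have h3 : 1/c - (1 - e₂)/(c+η) = (1/c - 1/(c+η)) + e₂/(c+η) := by rw [h2]; ring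
    rw [h3] at h1
    linarith
end

section
/- Let g be strictly decreasing, C¹ on [0,1] with g(0)=1, g(1)=0, and let σ_n ∼ PERM(g, n) be the g-random permutation. Then σ_n and σ_n⁻¹ have the same distribution: for every π ∈ S_n, ℙ(σ_n = π⁻¹) = ℙ(σ_n = π). -/
open Set Finset

/-- `Vperm n π i j` is `V_π(i/n, j/n) = (1/n)·#{t ∈ [n] : t ≤ i or π(t) ≤ j}`
(with `t` ranging over `Fin n`, identified with `{1,…,n}` via `t ↦ t+1`). -/
noncomputable def Vperm (n : ℕ) (π : Equiv.Perm (Fin n)) (i j : ℕ) : ℝ :=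
  ((Finset.univ.filter (fun t : Fin n => t.val + 1 ≤ i ∨ (π t).val + 1 ≤ j)).card : ℝ) / n

/-- The probability `ℙ(σ_n = π)` for `σ_n ∼ PERM(g,n)` (product formula). -/
noncomputable def permProb (g : ℝ → ℝ) (n : ℕ) (π : Equiv.Perm (Fin n)) : ℝ :=
  ∏ i : Fin n,
    (g (Vperm n π i.val (π i).val) - g (Vperm n π i.val (π i).val + 1 / n))
      / g ((i.val : ℝ) / n)

lemma Vperm_inv (n : ℕ) (π : Equiv.Perm (Fin n)) (i j : ℕ) :
    Vperm n π⁻¹ i j = Vperm n π j i := by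
  unfold Vperm
  congr 2
  apply Finset.card_equiv (π⁻¹ : Fin n ≃ Fin n)
  intro t
  simp [Or.comm]

theorem stmt_19 (g : ℝ → ℝ)
    (hanti : StrictAntiOn g (Icc 0 1)) (hC1 : ContDiffOn ℝ 1 g (Icc 0 1))
    (hg0 : g 0 = 1) (hg1 : g 1 = 0)
    (n : ℕ) (hn : 0 < n) (π : Equiv.Perm (Fin n)) :
    permProb g n π⁻¹ = permProb g n π := by
  set A : Fin n → ℝ := fun j =>
    g (Vperm n π j.val (π j).val) - g (Vperm n π j.val (π j).val + 1 / n) with hA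
  have h1 : permProb g n π⁻¹ = ∏ i : Fin n, A (π⁻¹ i) / g ((i.val : ℝ) / n) := by
    unfold permProb
    refine Finset.prod_congr rfl fun i _ => ?_
    rw [hA]
    simp only [Vperm_inv, ← Equiv.Perm.mul_apply, mul_inv_cancel, Equiv.Perm.one_apply]
  have h2 : permProb g n π = ∏ i : Fin n, A i / g ((i.val : ℝ) / n) := rfl
  rw [h1, h2, Finset.prod_div_distrib, Finset.prod_div_distrib,
    Equiv.prod_comp π⁻¹ A]
end
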